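/- Let K be a proper cone in ℝⁿ and A an n×n matrix such that for all nonzero δx ∈ K and nonzero h ∈ K* with ⟨h, δx⟩ = 0 one has ⟨h, A δx⟩ > 0 (strict sub-tangentiality). Then the flow e^{At} maps K into itself for all t ≥ 0, i.e., x ∈ K implies e^{At} x ∈ K. -/

import Mathlib

open Matrix

/-- A (convex) cone: closed under addition and nonnegative scaling. -/
def IsConvexCone {n : ℕ} (K : Set (Fin n → ℝ)) : Prop :=
  (∀ x ∈ K, ∀ y ∈ K, x + y ∈ K) ∧ (∀ x ∈ K, ∀ c : ℝ, 0 ≤ c → c • x ∈ K)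

/-- A proper cone: closed convex cone with nonempty interior, pointed. -/
def IsProperCone {n : ℕ} (K : Set (Fin n → ℝ)) : Prop :=
  IsConvexCone K ∧ IsClosed K ∧ (interior K).Nonempty ∧ ∀ x ∈ K, -x ∈ K → x = 0

/-- The dual cone. -/
def dualCone {n : ℕ} (K : Set (Fin n → ℝ)) : Set (Fin n → ℝ) :=
  {h | ∀ r ∈ K, 0 ≤ h ⬝ᵥ r}

open Filter Topology NormedSpace
open scoped Nat

section Aux

lemma cone_convex {n : ℕ} {K : Set (Fin n → ℝ)} (hK : IsConvexCone K) : Convex ℝ K := by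
  intro x hx y hy a b ha hb _
  exact hK.1 _ (hK.2 x hx a ha) _ (hK.2 y hy b hb)

lemma cone_zero_mem {n : ℕ} {K : Set (Fin n → ℝ)} (hK : IsConvexCone K) (hne : K.Nonempty) :
    (0 : Fin n → ℝ) ∈ K := by
  obtain ⟨w, hw⟩ := hne
  simpa using hK.2 w hw 0 le_rfl

lemma mem_of_dual {n : ℕ} {K : Set (Fin n → ℝ)} (hcone : IsConvexCone K) (hcl : IsClosed K)
    (hne : K.Nonempty) (z : Fin n → ℝ) (hz : ∀ h ∈ dualCone K, 0 ≤ h ⬝ᵥ z) : z ∈ K := by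
  by_contra hzK
  obtain ⟨f, u, hfK, hu⟩ := geometric_hahn_banach_closed_point (cone_convex hcone) hcl hzK
  have h0 : (0:ℝ) < u := by simpa using hfK 0 (cone_zero_mem hcone hne)
  have hfle : ∀ y ∈ K, f y ≤ 0 := by
    intro y hy
    by_contra hpos
    push_neg at hpos
    have hc : (0:ℝ) ≤ (u + 1) / f y := by positivity
    have := hfK _ (hcone.2 y hy _ hc)
    rw [_root_.map_smul] at this
    rw [smul_eq_mul, div_mul_cancel₀ _ (ne_of_gt hpos)] at this
    linarith
  set h : Fin n → ℝ := fun i => -f (Pi.single i 1) with hh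
  have hrep : ∀ y : Fin n → ℝ, h ⬝ᵥ y = -f y := by
    intro y
    have hy : y = ∑ i, Pi.single i (y i) := (Finset.univ_sum_single y).symm
    rw [dotProduct]
    conv_rhs => rw [hy]
    rw [map_sum, ← Finset.sum_neg_distrib]
    refine Finset.sum_congr rfl fun i _ => ?_
    have hps : Pi.single i (y i) = y i • (Pi.single i 1 : Fin n → ℝ) := by
      rw [← Pi.single_smul, smul_eq_mul, mul_one]
    rw [hps, _root_.map_smul, smul_eq_mul, hh]
    ring
  have hmem : h ∈ dualCone K := fun r hr => by rw [hrep]; linarith [hfle r hr]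
  have := hz h hmem
  rw [hrep z] at this
  linarith

lemma norm_pow_sub_pow_le' {𝔸 : Type*} [NormedRing 𝔸] [NormOneClass 𝔸] (u v : 𝔸) (C : ℝ)
    (hu : ‖u‖ ≤ C) (hv : ‖v‖ ≤ C) (hC : 0 ≤ C) :
    ∀ m : ℕ, ‖u ^ m - v ^ m‖ ≤ m * C ^ (m - 1) * ‖u - v‖ := by
  intro m
  induction m with
  | zero => simp
  | succ m ih =>
    have key : u ^ (m+1) - v ^ (m+1) = u * (u ^ m - v ^ m) + (u - v) * v ^ m := by
      rw [pow_succ', pow_succ', mul_sub, sub_mul]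
      abel
    rw [key]
    have h1 : ‖u * (u ^ m - v ^ m)‖ ≤ C * (m * C ^ (m-1) * ‖u - v‖) :=
      le_trans (norm_mul_le _ _) (mul_le_mul hu ih (norm_nonneg _) hC)
    have h2 : ‖(u - v) * v ^ m‖ ≤ ‖u - v‖ * C ^ m :=
      le_trans (norm_mul_le _ _)
        (mul_le_mul_of_nonneg_left (le_trans (norm_pow_le _ _)
          (pow_le_pow_left₀ (norm_nonneg _) hv m)) (norm_nonneg _))
    have h3 : C * (m * C ^ (m-1) * ‖u - v‖) ≤ m * C ^ m * ‖u - v‖ := by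
      rcases Nat.eq_zero_or_pos m with hm | hm
      · simp [hm]
      · have hCC : C * C ^ (m - 1) = C ^ m := by
          rw [← pow_succ']
          congr 1
          omega
        refine le_of_eq ?_
        calc C * (m * C ^ (m-1) * ‖u - v‖) = (C * C ^ (m-1)) * (m * ‖u - v‖) := by ring
          _ = C ^ m * (m * ‖u - v‖) := by rw [hCC]
          _ = m * C ^ m * ‖u - v‖ := by ring
    calc ‖u * (u ^ m - v ^ m) + (u - v) * v ^ m‖
        ≤ C * (m * C ^ (m-1) * ‖u - v‖) + ‖u - v‖ * C ^ m :=
          le_trans (norm_add_le _ _) (add_le_add h1 h2)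
      _ ≤ m * C ^ m * ‖u - v‖ + ‖u - v‖ * C ^ m := by linarith
      _ = (↑(m+1)) * C ^ ((m+1) - 1) * ‖u - v‖ := by
          rw [Nat.add_sub_cancel]
          push_cast
          ring

variable {𝔸 : Type*} [NormedRing 𝔸] [NormOneClass 𝔸] [NormedAlgebra ℝ 𝔸] [CompleteSpace 𝔸]

omit [CompleteSpace 𝔸] in
lemma norm_exp_le' (b : 𝔸) : ‖exp b‖ ≤ Real.exp ‖b‖ := by
  rw [exp_eq_tsum ℝ]
  refine le_trans (norm_tsum_le_tsum_norm (norm_expSeries_summable' b)) ?_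
  rw [Real.exp_eq_exp_ℝ, exp_eq_tsum_div]
  refine Summable.tsum_le_tsum (fun k => ?_) (norm_expSeries_summable' b)
    (Real.summable_pow_div_factorial ‖b‖)
  rw [norm_smul, norm_inv, Real.norm_natCast, div_eq_inv_mul]
  exact mul_le_mul_of_nonneg_left (norm_pow_le _ _) (by positivity)

lemma norm_exp_sub_one_sub_le' (b : 𝔸) :
    ‖exp b - 1 - b‖ ≤ ‖b‖ ^ 2 * Real.exp ‖b‖ := by
  have hs : Summable fun k : ℕ => (k !⁻¹ : ℝ) • b ^ k := expSeries_summable' b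
  have hsum := Summable.sum_add_tsum_nat_add 2 hs
  have h01 : ∑ i ∈ Finset.range 2, (i !⁻¹ : ℝ) • b ^ i = 1 + b := by
    simp [Finset.sum_range_succ]
  have hrw : exp b - 1 - b = ∑' k : ℕ, (((k + 2)! : ℝ))⁻¹ • b ^ (k + 2) := by
    have he : exp b = ∑' k : ℕ, (k !⁻¹ : ℝ) • b ^ k := by rw [exp_eq_tsum ℝ]
    rw [he, ← hsum, h01]
    abel
  rw [hrw]
  have hns : Summable fun k : ℕ => ‖(k !⁻¹ : ℝ) • b ^ k‖ := norm_expSeries_summable' b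
  have hns2 : Summable fun k : ℕ => ‖(((k + 2)! : ℝ))⁻¹ • b ^ (k + 2)‖ :=
    (summable_nat_add_iff 2).2 hns
  refine le_trans (norm_tsum_le_tsum_norm hns2) ?_
  have hmaj : ∀ k : ℕ, ‖(((k + 2)! : ℝ))⁻¹ • b ^ (k + 2)‖ ≤ ‖b‖ ^ 2 * (‖b‖ ^ k / k !) := by
    intro k
    rw [norm_smul, norm_inv, Real.norm_natCast]
    have h1 : ‖b ^ (k + 2)‖ ≤ ‖b‖ ^ (k + 2) := norm_pow_le _ _
    have h2 : ((k)! : ℝ) ≤ ((k+2)! : ℝ) := by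
      exact_mod_cast Nat.factorial_le (by omega)
    have h3 : (0:ℝ) < (k)! := by positivity
    calc ((k+2)! : ℝ)⁻¹ * ‖b ^ (k+2)‖ ≤ ((k+2)! : ℝ)⁻¹ * ‖b‖ ^ (k+2) :=
          mul_le_mul_of_nonneg_left h1 (by positivity)
      _ ≤ ((k)! : ℝ)⁻¹ * ‖b‖ ^ (k+2) := by
          refine mul_le_mul_of_nonneg_right ?_ (by positivity)
          exact inv_anti₀ h3 h2
      _ = ‖b‖ ^ 2 * (‖b‖ ^ k / (k)!) := by
          rw [pow_add]
          ring
  refine le_trans (Summable.tsum_le_tsum hmaj hns2 ?_) ?_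
  · exact (Real.summable_pow_div_factorial ‖b‖).mul_left _
  · rw [tsum_mul_left, Real.exp_eq_exp_ℝ, exp_eq_tsum_div]

lemma tendsto_one_add_smul_pow_exp (a : 𝔸) :
    Tendsto (fun m : ℕ => (1 + (m : ℝ)⁻¹ • a) ^ m) atTop (𝓝 (exp a)) := by
  set E : ℝ := Real.exp ‖a‖ with hE
  have hE1 : (1:ℝ) ≤ E := Real.one_le_exp (norm_nonneg a)
  have key : ∀ m : ℕ, 1 ≤ m →
      ‖(1 + (m : ℝ)⁻¹ • a) ^ m - exp a‖ ≤ ‖a‖ ^ 2 * E * E / m := by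
    intro m hm
    have hm0 : (0:ℝ) < m := by exact_mod_cast hm
    set b : 𝔸 := (m : ℝ)⁻¹ • a with hb
    have hnb : ‖b‖ = ‖a‖ / m := by
      rw [hb, norm_smul, norm_inv, Real.norm_natCast, div_eq_inv_mul]
    have hmb : m • b = a := by
      rw [← Nat.cast_smul_eq_nsmul ℝ, hb, smul_smul, mul_inv_cancel₀ (ne_of_gt hm0), one_smul]
    have hexp : exp a = (exp b) ^ m := by
      letI : NormedAlgebra ℚ 𝔸 := NormedAlgebra.restrictScalars ℚ ℝ 𝔸
      rw [← hmb, NormedSpace.exp_nsmul]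
    have hnbla : ‖b‖ ≤ ‖a‖ := by
      rw [hnb]
      exact div_le_self (norm_nonneg a) (by exact_mod_cast hm)
    set C : ℝ := Real.exp ‖b‖ with hC
    have hC0 : (0:ℝ) ≤ C := (Real.exp_pos _).le
    have hCE : C ≤ E := Real.exp_le_exp.2 hnbla
    have hu : ‖exp b‖ ≤ C := norm_exp_le' b
    have hv : ‖1 + b‖ ≤ C := by
      calc ‖1 + b‖ ≤ ‖(1:𝔸)‖ + ‖b‖ := norm_add_le _ _
        _ = 1 + ‖b‖ := by rw [norm_one]
        _ ≤ Real.exp ‖b‖ := by linarith [Real.add_one_le_exp ‖b‖]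
    have hCpow : C ^ (m - 1) ≤ E := by
      rw [hC, ← Real.exp_nat_mul, hE]
      refine Real.exp_le_exp.2 ?_
      rw [hnb]
      rw [div_eq_inv_mul, ← mul_assoc]
      have h1 : ((m - 1 : ℕ) : ℝ) * (m:ℝ)⁻¹ ≤ 1 := by
        rw [← div_eq_mul_inv]
        refine div_le_one_of_le₀ ?_ hm0.le
        exact_mod_cast Nat.sub_le m 1
      nlinarith [norm_nonneg a]
    have hdiff : ‖(1 + b) - exp b‖ ≤ (‖a‖ / m) ^ 2 * C := by
      rw [norm_sub_rev, sub_add_eq_sub_sub, ← hnb]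
      exact norm_exp_sub_one_sub_le' b
    calc ‖(1 + b) ^ m - exp a‖ = ‖(1+b) ^ m - (exp b) ^ m‖ := by rw [hexp]
      _ ≤ m * C ^ (m-1) * ‖(1+b) - exp b‖ := norm_pow_sub_pow_le' _ _ C hv hu hC0 m
      _ ≤ m * E * ((‖a‖ / m) ^ 2 * E) := by
          refine mul_le_mul (mul_le_mul_of_nonneg_left hCpow hm0.le)
            (hdiff.trans (mul_le_mul_of_nonneg_left hCE (by positivity))) (norm_nonneg _) ?_
          positivity
      _ = ‖a‖ ^ 2 * E * E / m := by
          field_simp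
  have h0 : Tendsto (fun m : ℕ => (1 + (m : ℝ)⁻¹ • a) ^ m - exp a) atTop (𝓝 0) := by
    refine squeeze_zero_norm' ?_ (tendsto_const_div_atTop_nhds_zero_nat (‖a‖ ^ 2 * E * E))
    filter_upwards [eventually_ge_atTop 1] with m hm using key m hm
  have := h0.add (tendsto_const_nhds :
    Tendsto (fun _ : ℕ => exp a) atTop (𝓝 (exp a)))
  simpa using this

lemma cont_dot_right {n : ℕ} (w : Fin n → ℝ) : Continuous fun v : Fin n → ℝ => v ⬝ᵥ w := by
  have : (fun v : Fin n → ℝ => v ⬝ᵥ w) = fun v => ∑ i, v i * w i := rfl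
  rw [this]
  exact continuous_finset_sum _ fun i _ => (continuous_apply i).mul continuous_const

lemma cont_mulVec {n : ℕ} (A : Matrix (Fin n) (Fin n) ℝ) :
    Continuous fun v : Fin n → ℝ => A *ᵥ v := by
  refine continuous_pi fun i => ?_
  have : (fun v : Fin n → ℝ => (A *ᵥ v) i) = fun v => ∑ j, A i j * v j := rfl
  rw [this]
  exact continuous_finset_sum _ fun j _ => continuous_const.mul (continuous_apply j)

lemma cont_mulVec_left {n : ℕ} (x : Fin n → ℝ) :
    Continuous fun M : Matrix (Fin n) (Fin n) ℝ => M *ᵥ x := by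
  refine continuous_pi fun i => ?_
  have : (fun M : Matrix (Fin n) (Fin n) ℝ => (M *ᵥ x) i) = fun M => ∑ j, M i j * x j := rfl
  rw [this]
  exact continuous_finset_sum _ fun j _ =>
    ((continuous_id.matrix_elem i j).mul continuous_const)

lemma cont_dot_pair {n : ℕ} :
    Continuous fun q : (Fin n → ℝ) × (Fin n → ℝ) => q.2 ⬝ᵥ q.1 := by
  have : (fun q : (Fin n → ℝ) × (Fin n → ℝ) => q.2 ⬝ᵥ q.1)
      = fun q => ∑ i, q.2 i * q.1 i := rfl
  rw [this]
  exact continuous_finset_sum _ fun i _ =>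
    ((continuous_apply i).comp continuous_snd).mul ((continuous_apply i).comp continuous_fst)

lemma dualCone_isClosed {n : ℕ} (K : Set (Fin n → ℝ)) : IsClosed (dualCone K) := by
  have : dualCone K = ⋂ r ∈ K, {h : Fin n → ℝ | 0 ≤ h ⬝ᵥ r} := by
    ext h
    simp [dualCone, Set.mem_iInter]
  rw [this]
  exact isClosed_biInter fun r _ => isClosed_le continuous_const (cont_dot_right r)

lemma dualCone_smul {n : ℕ} {K : Set (Fin n → ℝ)} {h : Fin n → ℝ} (hh : h ∈ dualCone K)
    {c : ℝ} (hc : 0 ≤ c) : c • h ∈ dualCone K := fun r hr => by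
  rw [smul_dotProduct, smul_eq_mul]
  exact mul_nonneg hc (hh r hr)

lemma uniform_eps {n : ℕ} {K : Set (Fin n → ℝ)} (hKc : IsConvexCone K)
    (hcl : IsClosed K) (A : Matrix (Fin n) (Fin n) ℝ)
    (hsub : ∀ δx ∈ K, δx ≠ 0 → ∀ h ∈ dualCone K, h ≠ 0 →
      h ⬝ᵥ δx = 0 → 0 < h ⬝ᵥ (A *ᵥ δx)) :
    ∃ ε : ℝ, 0 < ε ∧ ∀ x ∈ K, ∀ h ∈ dualCone K,
      0 ≤ h ⬝ᵥ x + ε * (h ⬝ᵥ (A *ᵥ x)) := by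
  by_contra hcon
  push_neg at hcon
  have Hm : ∀ m : ℕ, ∃ q : (Fin n → ℝ) × (Fin n → ℝ),
      (q.1 ∈ K ∧ ‖q.1‖ = 1) ∧ (q.2 ∈ dualCone K ∧ ‖q.2‖ = 1) ∧
      q.2 ⬝ᵥ q.1 + (1 / ((m : ℝ) + 1)) * (q.2 ⬝ᵥ (A *ᵥ q.1)) < 0 := by
    intro m
    obtain ⟨x, hx, h, hh, hlt⟩ := hcon (1 / ((m : ℝ) + 1)) (by positivity)
    have hx0 : x ≠ 0 := by
      rintro rfl
      simp [Matrix.mulVec_zero, dotProduct_zero] at hlt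
    have hh0 : h ≠ 0 := by
      rintro rfl
      simp [zero_dotProduct] at hlt
    have hxn : (0:ℝ) < ‖x‖ := norm_pos_iff.2 hx0
    have hhn : (0:ℝ) < ‖h‖ := norm_pos_iff.2 hh0
    refine ⟨(‖x‖⁻¹ • x, ‖h‖⁻¹ • h), ⟨hKc.2 x hx _ (by positivity), ?_⟩,
      ⟨dualCone_smul hh (by positivity), ?_⟩, ?_⟩
    · rw [norm_smul, norm_inv, norm_norm, inv_mul_cancel₀ (ne_of_gt hxn)]
    · rw [norm_smul, norm_inv, norm_norm, inv_mul_cancel₀ (ne_of_gt hhn)]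
    · have hrw : (‖h‖⁻¹ • h) ⬝ᵥ (‖x‖⁻¹ • x)
          + (1 / ((m : ℝ) + 1)) * ((‖h‖⁻¹ • h) ⬝ᵥ (A *ᵥ (‖x‖⁻¹ • x)))
          = (‖h‖⁻¹ * ‖x‖⁻¹) * (h ⬝ᵥ x + (1 / ((m : ℝ) + 1)) * (h ⬝ᵥ (A *ᵥ x))) := by
        rw [Matrix.mulVec_smul]
        simp only [smul_dotProduct, dotProduct_smul, smul_eq_mul]
        ring
      rw [hrw]
      exact mul_neg_of_pos_of_neg (by positivity) hlt
  choose p hp using Hm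
  set S : Set ((Fin n → ℝ) × (Fin n → ℝ)) :=
    (K ∩ {v | ‖v‖ = 1}) ×ˢ (dualCone K ∩ {v | ‖v‖ = 1}) with hS
  have hSclosed : IsClosed S :=
    ((hcl.inter (isClosed_eq continuous_norm continuous_const)).prod
      ((dualCone_isClosed K).inter (isClosed_eq continuous_norm continuous_const)))
  have hSsub : S ⊆ Metric.closedBall 0 1 ×ˢ Metric.closedBall 0 1 := by
    rintro ⟨a, b⟩ ⟨⟨_, ha⟩, ⟨_, hb⟩⟩
    constructor
    · simp [Metric.mem_closedBall, dist_zero_right, ha.le]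
    · simp [Metric.mem_closedBall, dist_zero_right, hb.le]
  have hScompact : IsCompact S :=
    ((isCompact_closedBall _ _).prod (isCompact_closedBall _ _)).of_isClosed_subset
      hSclosed hSsub
  have hpS : ∀ m, p m ∈ S := by
    intro m
    obtain ⟨⟨h1, h2⟩, ⟨h3, h4⟩, _⟩ := hp m
    exact ⟨⟨h1, h2⟩, ⟨h3, h4⟩⟩
  obtain ⟨q, hqS, ψ, hψ, hconv⟩ := hScompact.tendsto_subseq hpS
  obtain ⟨⟨hq1K, hq1n⟩, ⟨hq2K, hq2n⟩⟩ := hqS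
  have hF : Continuous fun q : (Fin n → ℝ) × (Fin n → ℝ) => q.2 ⬝ᵥ q.1 := cont_dot_pair
  have hG : Continuous fun q : (Fin n → ℝ) × (Fin n → ℝ) => q.2 ⬝ᵥ (A *ᵥ q.1) := by
    have : (fun q : (Fin n → ℝ) × (Fin n → ℝ) => q.2 ⬝ᵥ (A *ᵥ q.1))
        = (fun q : (Fin n → ℝ) × (Fin n → ℝ) => q.2 ⬝ᵥ q.1)
          ∘ fun q : (Fin n → ℝ) × (Fin n → ℝ) => (A *ᵥ q.1, q.2) := rfl
    rw [this]
    exact cont_dot_pair.comp (((cont_mulVec A).comp continuous_fst).prodMk continuous_snd)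
  have hFlim : Tendsto (fun m => (p (ψ m)).2 ⬝ᵥ (p (ψ m)).1) atTop (𝓝 (q.2 ⬝ᵥ q.1)) :=
    (hF.tendsto q).comp hconv
  have hGlim : Tendsto (fun m => (p (ψ m)).2 ⬝ᵥ (A *ᵥ (p (ψ m)).1)) atTop
      (𝓝 (q.2 ⬝ᵥ (A *ᵥ q.1))) := (hG.tendsto q).comp hconv
  have hεlim : Tendsto (fun m => 1 / ((ψ m : ℝ) + 1)) atTop (𝓝 0) :=
    tendsto_one_div_add_atTop_nhds_zero_nat.comp hψ.tendsto_atTop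
  have htot : Tendsto (fun m => (p (ψ m)).2 ⬝ᵥ (p (ψ m)).1
      + (1 / ((ψ m : ℝ) + 1)) * ((p (ψ m)).2 ⬝ᵥ (A *ᵥ (p (ψ m)).1))) atTop
      (𝓝 (q.2 ⬝ᵥ q.1)) := by
    have := hFlim.add (hεlim.mul hGlim)
    simpa using this
  have hFq_le : q.2 ⬝ᵥ q.1 ≤ 0 :=
    le_of_tendsto htot (Eventually.of_forall fun m => (hp (ψ m)).2.2.le)
  have hFq_ge : 0 ≤ q.2 ⬝ᵥ q.1 := hq2K q.1 hq1K
  have hGneg : ∀ m : ℕ, (p (ψ m)).2 ⬝ᵥ (A *ᵥ (p (ψ m)).1) < 0 := by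
    intro m
    obtain ⟨⟨hk1, _⟩, ⟨hk2, _⟩, hlt⟩ := hp (ψ m)
    have hnn : 0 ≤ (p (ψ m)).2 ⬝ᵥ (p (ψ m)).1 := hk2 _ hk1
    have hpos : (0:ℝ) < 1 / ((ψ m : ℝ) + 1) := by positivity
    nlinarith
  have hGq : q.2 ⬝ᵥ (A *ᵥ q.1) ≤ 0 :=
    le_of_tendsto hGlim (Eventually.of_forall fun m => (hGneg m).le)
  have hq1ne : q.1 ≠ 0 := by
    intro h0
    rw [h0] at hq1n
    simp at hq1n
  have hq2ne : q.2 ≠ 0 := by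
    intro h0
    rw [h0] at hq2n
    simp at hq2n
  have := hsub q.1 hq1K hq1ne q.2 hq2K hq2ne (le_antisymm hFq_le hFq_ge)
  linarith

lemma matrix_exp_tendsto {n : ℕ} (hn : n ≠ 0) (a : Matrix (Fin n) (Fin n) ℝ) :
    Tendsto (fun m : ℕ => (1 + (m : ℝ)⁻¹ • a) ^ m) atTop (𝓝 (exp a)) := by
  letI : SeminormedRing (Matrix (Fin n) (Fin n) ℝ) := Matrix.linftyOpSemiNormedRing
  letI : NormedRing (Matrix (Fin n) (Fin n) ℝ) := Matrix.linftyOpNormedRing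
  letI : NormedAlgebra ℝ (Matrix (Fin n) (Fin n) ℝ) := Matrix.linftyOpNormedAlgebra
  haveI : Nonempty (Fin n) := ⟨⟨0, Nat.pos_of_ne_zero hn⟩⟩
  letI : NormOneClass (Matrix (Fin n) (Fin n) ℝ) := Matrix.linfty_opNormOneClass
  exact tendsto_one_add_smul_pow_exp a

end Aux

/-- Sub-tangentiality implies forward invariance: if K is a proper cone and A
satisfies strict sub-tangentiality with respect to K, then e^{At} maps K into
itself for all t ≥ 0. -/
theorem stmt14 {n : ℕ} (K : Set (Fin n → ℝ)) (hK : IsProperCone K)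
    (A : Matrix (Fin n) (Fin n) ℝ)
    (hsub : ∀ δx ∈ K, δx ≠ 0 → ∀ h ∈ dualCone K, h ≠ 0 →
      h ⬝ᵥ δx = 0 → 0 < h ⬝ᵥ (A *ᵥ δx)) :
    ∀ t : ℝ, 0 ≤ t → ∀ x ∈ K, (NormedSpace.exp (t • A)) *ᵥ x ∈ K := by
  obtain ⟨hKc, hcl, hint, -⟩ := hK
  rcases Nat.eq_zero_or_pos n with hn | hn
  · subst hn
    intro t _ x hx
    haveI : Unique (Fin 0 → ℝ) := ⟨⟨fun i => i.elim0⟩, fun f => funext fun i => i.elim0⟩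
    have : (NormedSpace.exp (t • A)) *ᵥ x = x := Subsingleton.elim _ _
    rwa [this]
  · have hne : K.Nonempty := ⟨hint.choose, interior_subset hint.choose_spec⟩
    obtain ⟨ε, hε0, hε⟩ := uniform_eps hKc hcl A hsub
    have hstep : ∀ s : ℝ, 0 ≤ s → s ≤ ε → ∀ y ∈ K, y + s • (A *ᵥ y) ∈ K := by
      intro s hs0 hsε y hy
      refine mem_of_dual hKc hcl hne _ fun h hh => ?_
      rw [dotProduct_add, dotProduct_smul, smul_eq_mul]
      have h1 : 0 ≤ h ⬝ᵥ y := hh y hy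
      have h2 := hε y hy h hh
      rcases le_or_gt 0 (h ⬝ᵥ (A *ᵥ y)) with hQ | hQ
      · have := mul_nonneg hs0 hQ
        linarith
      · have h3 : ε * (h ⬝ᵥ (A *ᵥ y)) ≤ s * (h ⬝ᵥ (A *ᵥ y)) :=
          mul_le_mul_of_nonpos_right hsε hQ.le
        linarith
    have hpow : ∀ s : ℝ, 0 ≤ s → s ≤ ε → ∀ m : ℕ, ∀ y ∈ K,
        ((1 + s • A) ^ m) *ᵥ y ∈ K := by
      intro s hs0 hsε m
      induction m with
      | zero => intro y hy; simpa [Matrix.one_mulVec] using hy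
      | succ m ih =>
        intro y hy
        rw [pow_succ, ← Matrix.mulVec_mulVec]
        refine ih _ ?_
        rw [Matrix.add_mulVec, Matrix.one_mulVec, Matrix.smul_mulVec]
        exact hstep s hs0 hsε y hy
    intro t ht x hx
    have hmat := matrix_exp_tendsto (Nat.pos_iff_ne_zero.mp hn) (t • A)
    have hvec : Tendsto (fun m : ℕ => ((1 + (m : ℝ)⁻¹ • (t • A)) ^ m) *ᵥ x) atTop
        (𝓝 ((NormedSpace.exp (t • A)) *ᵥ x)) :=
      ((cont_mulVec_left x).tendsto _).comp hmat
    refine hcl.mem_of_tendsto hvec ?_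
    obtain ⟨N, hN⟩ := exists_nat_ge (t / ε)
    filter_upwards [eventually_ge_atTop (max N 1)] with m hm
    have hm1 : 1 ≤ m := le_trans (le_max_right N 1) hm
    have hmN : N ≤ m := le_trans (le_max_left N 1) hm
    have hm0 : (0:ℝ) < m := by exact_mod_cast hm1
    have hsmul : (m : ℝ)⁻¹ • (t • A) = ((m : ℝ)⁻¹ * t) • A := smul_smul _ _ _
    rw [hsmul]
    refine hpow _ (by positivity) ?_ m x hx
    have hmNr : (N : ℝ) ≤ m := by exact_mod_cast hmN
    rw [inv_mul_eq_div, div_le_iff₀ hm0]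
    have : t ≤ ε * N := by
      rw [div_le_iff₀ hε0] at hN
      linarith
    nlinarith
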